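/- Let ℓ > 1, let (P,≻,q) be a problem, and let P' be a Nash equilibrium of the game (GS^ℓ, P) with semi-sophisticated students. For each student i, let r_i be the number of competitive schools that i has dropped under P'_i but prefers (under P_i) to at least one of the top ℓ acceptable schools she lists under P'_i. Then GS^ℓ(P', ≻, q) = GS(P^k̄, ≻, q), where k̄_i = ℓ + r_i for each student i (i.e., the equilibrium outcome equals the deferred acceptance outcome when each student i reports the truncation P_i^{ℓ + r_i} of her true preferences). -/

import Mathlib

/-!
School choice framework following Bonkoungou–Nesterov,
"Reforms meet fairness concerns in school and college admissions".

Students `I` and schools `S` are finite types with `|I| > |S|`.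
A strict preference relation of a student over `S ∪ {∅}` is represented by a list
of `Option S` containing every element exactly once (earlier = more preferred);
`none` is the outside option.  A strict priority order of a school is a list of
`I` containing every student exactly once (earlier = higher priority).
-/

namespace SchoolChoice

variable {I S : Type*} [Fintype I] [DecidableEq I] [Fintype S] [DecidableEq S]

/-- `p` is a strict preference relation on `S ∪ {∅}`: a ranking list containing every
element of `Option S` exactly once. -/
def ValidPref (p : List (Option S)) : Prop := p.Nodup ∧ ∀ x : Option S, x ∈ p

/-- `pr` is a strict priority order: a ranking list containing every student exactly once. -/
def ValidPrio (pr : List I) : Prop := pr.Nodup ∧ ∀ i : I, i ∈ pr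

/-- `a` is strictly preferred to `b` under the preference relation `p`. -/
def prefLt (p : List (Option S)) (a b : Option S) : Prop := p.idxOf a < p.idxOf b

/-- `i` has strictly higher priority than `j` under the priority order `pr`. -/
def prioLt (pr : List I) (i j : I) : Prop := pr.idxOf i < pr.idxOf j

instance (p : List (Option S)) (a b : Option S) : Decidable (prefLt p a b) :=
  inferInstanceAs (Decidable (_ < _))

instance (pr : List I) (i j : I) : Decidable (prioLt pr i j) :=
  inferInstanceAs (Decidable (_ < _))

/-- The acceptable schools of `p` (those preferred to the outside option), in preference
order. -/
def acceptables (p : List (Option S)) : List S := (p.takeWhile Option.isSome).filterMap id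

/-- The truncation of `p` after its `k`-th acceptable school: the preference relation
listing, in the same order, only the `min k _` most-preferred acceptable schools of `p`,
all other schools being unacceptable (kept below `none` in their original order). -/
def truncate (p : List (Option S)) (k : ℕ) : List (Option S) :=
  ((acceptables p).take k).map some ++
    none :: p.filter (fun x => decide (x ≠ none ∧ x ∉ ((acceptables p).take k).map some))

/-- `μ` is a matching: it respects the capacities `q`. -/
def IsMatching (q : S → ℕ) (μ : I → Option S) : Prop :=
  ∀ s : S, (Finset.univ.filter (fun i => μ i = some s)).card ≤ q s

/-- The pair `(i, s)` blocks `μ` under the problem `(P, prio, q)`. -/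
def Blocks (P : I → List (Option S)) (prio : S → List I) (q : S → ℕ)
    (μ : I → Option S) (i : I) (s : S) : Prop :=
  prefLt (P i) (some s) (μ i) ∧
    ((Finset.univ.filter (fun j => μ j = some s)).card < q s ∨
      ∃ j : I, μ j = some s ∧ prioLt (prio s) i j)

/-- `i` is a blocking student for `μ` under `(P, prio, q)`. -/
def BlockingStudent (P : I → List (Option S)) (prio : S → List I) (q : S → ℕ)
    (μ : I → Option S) (i : I) : Prop :=
  ∃ s : S, Blocks P prio q μ i s

/-- `μ` is individually rational under `P`. -/
def IndividuallyRational (P : I → List (Option S)) (μ : I → Option S) : Prop :=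
  ∀ i : I, ¬ prefLt (P i) none (μ i)

/-- `μ` is stable at `(P, prio, q)`. -/
def IsStable (P : I → List (Option S)) (prio : S → List I) (q : S → ℕ)
    (μ : I → Option S) : Prop :=
  IndividuallyRational P μ ∧ ∀ i : I, ¬ BlockingStudent P prio q μ i

/-- The number of blocking students for `μ` under `(P, prio, q)`. -/
noncomputable def numBlocking (P : I → List (Option S)) (prio : S → List I) (q : S → ℕ)
    (μ : I → Option S) : ℕ :=
  {i : I | BlockingStudent P prio q μ i}.ncard

/-! ### The Gale–Shapley student-proposing deferred acceptance mechanism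

The state `σ : I → ℕ` records, for each student, how many of her acceptable schools
have already rejected her; she currently applies to the `σ i`-th school on her list
(if any).  At each round every school tentatively keeps the `q s` highest-priority
students among its current applicants and rejects the rest, who move on. -/

/-- The school student `i` currently applies to. -/
def daTarget (P : I → List (Option S)) (σ : I → ℕ) (i : I) : Option S :=
  (acceptables (P i))[σ i]?

/-- The students tentatively held by school `s`: the `q s` highest-priority current
applicants. -/
def daHeld (P : I → List (Option S)) (prio : S → List I) (q : S → ℕ)
    (σ : I → ℕ) (s : S) : List I :=
  ((prio s).filter (fun i => decide (daTarget P σ i = some s))).take (q s)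

/-- One round of deferred acceptance: every rejected student moves to her next choice. -/
def daStep (P : I → List (Option S)) (prio : S → List I) (q : S → ℕ)
    (σ : I → ℕ) : I → ℕ := fun i =>
  match daTarget P σ i with
  | none => σ i
  | some s => if i ∈ daHeld P prio q σ s then σ i else σ i + 1

/-- The Gale–Shapley (student-proposing deferred acceptance) mechanism.  Iterating the
round map `|I| * |S| + 1` times is guaranteed to reach the terminal state. -/
def GS (P : I → List (Option S)) (prio : S → List I) (q : S → ℕ) : I → Option S :=
  fun i =>
    let σ := (daStep P prio q)^[Fintype.card I * Fintype.card S + 1] (fun _ => 0)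
    match daTarget P σ i with
    | none => none
    | some s => if i ∈ daHeld P prio q σ s then some s else none

/-- The constrained Gale–Shapley mechanism `GS^k`. -/
def GSk (k : ℕ) (P : I → List (Option S)) (prio : S → List I) (q : S → ℕ) : I → Option S :=
  GS (fun i => truncate (P i) k) prio q

/-! ### The Boston (immediate acceptance) mechanism -/

/-- Round `t` of the Boston mechanism: each not-yet-accepted student applies to her
`t`-th ranked acceptable school (0-indexed), and each school permanently accepts, up to
its remaining capacity, its highest-priority new applicants. -/
def bostonRound (P : I → List (Option S)) (prio : S → List I) (q : S → ℕ)
    (μ : I → Option S) (t : ℕ) : I → Option S := fun i =>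
  match μ i with
  | some s => some s
  | none =>
    match (acceptables (P i))[t]? with
    | none => none
    | some s =>
      if i ∈ ((prio s).filter
            (fun j => decide (μ j = none ∧ (acceptables (P j))[t]? = some s))).take
          (q s - (Finset.univ.filter (fun j => μ j = some s)).card)
      then some s else none

/-- The Boston (immediate acceptance) mechanism. -/
def Boston (P : I → List (Option S)) (prio : S → List I) (q : S → ℕ) : I → Option S :=
  (List.range (Fintype.card S)).foldl (bostonRound P prio q) (fun _ => none)

/-- The constrained Boston mechanism `β^k`. -/
def Bostonk (k : ℕ) (P : I → List (Option S)) (prio : S → List I) (q : S → ℕ) :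
    I → Option S :=
  Boston (fun i => truncate (P i) k) prio q

/-! ### The first-preference-first mechanism -/

/-- The adjusted priority profile: each first-preference-first school (member of `fpf`)
ranks students first by the rank they assign to it under `P` (counting the ranking of the
outside option as well), ties broken by the original priority; equal-preference schools
keep their original priority. -/
def fpfPrio (fpf : Finset S) (P : I → List (Option S)) (prio : S → List I) : S → List I :=
  fun s =>
    if s ∈ fpf then
      (List.range (Fintype.card S + 1)).flatMap
        (fun r => (prio s).filter (fun i => decide ((P i).idxOf (some s) = r)))
    else prio s

/-- The first-preference-first mechanism with set `fpf` of first-preference-first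
schools: Gale–Shapley run on the adjusted priorities. -/
def FPF (fpf : Finset S) (P : I → List (Option S)) (prio : S → List I) (q : S → ℕ) :
    I → Option S :=
  GS P (fpfPrio fpf P prio) q

/-- The constrained first-preference-first mechanism `FPF^k`. -/
def FPFk (fpf : Finset S) (k : ℕ) (P : I → List (Option S)) (prio : S → List I)
    (q : S → ℕ) : I → Option S :=
  FPF fpf (fun i => truncate (P i) k) prio q

/-! ### Manipulation and equilibrium notions -/

/-- Student `i` is a manipulating student of the mechanism `φ` (with priorities and
capacities fixed) at the true profile `P`. -/
def ManipulatingStudent (φ : (I → List (Option S)) → I → Option S)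
    (P : I → List (Option S)) (i : I) : Prop :=
  ∃ Q : List (Option S), ValidPref Q ∧
    prefLt (P i) (φ (Function.update P i Q) i) (φ P i)

/-- The mechanism `φ` is not manipulable at `P`. -/
def NotManipulable (φ : (I → List (Option S)) → I → Option S)
    (P : I → List (Option S)) : Prop :=
  ∀ i : I, ¬ ManipulatingStudent φ P i

/-- `P'` is a Nash equilibrium of the game `(φ, P)` in which the sophisticated students
are the members of `M` (who may misreport, and best respond) and all other (sincere)
students report truthfully. -/
def NashEq (φ : (I → List (Option S)) → I → Option S) (P : I → List (Option S))
    (M : Finset I) (P' : I → List (Option S)) : Prop :=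
  (∀ i, ValidPref (P' i)) ∧ (∀ i ∉ M, P' i = P i) ∧
    ∀ i ∈ M, ∀ Q : List (Option S), ValidPref Q →
      ¬ prefLt (P i) (φ (Function.update P' i Q) i) (φ P' i)

/-! ### Semi-sophisticated students -/

/-- Student `i` is guaranteed her first choice `s`: `s` is her most-preferred acceptable
school and `i` is among the `q s` highest-priority students at `s`. -/
def GuaranteedFirstChoice (P : I → List (Option S)) (prio : S → List I) (q : S → ℕ)
    (i : I) (s : S) : Prop :=
  (acceptables (P i)).head? = some s ∧ (prio s).idxOf i < q s

instance (P : I → List (Option S)) (prio : S → List I) (q : S → ℕ) (i : I) (s : S) :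
    Decidable (GuaranteedFirstChoice P prio q i s) :=
  inferInstanceAs (Decidable (_ ∧ _))

/-- School `s` is competitive: at least `q s` students are guaranteed their first
choice `s`. -/
def Competitive (P : I → List (Option S)) (prio : S → List I) (q : S → ℕ) (s : S) : Prop :=
  q s ≤ (Finset.univ.filter (fun i => GuaranteedFirstChoice P prio q i s)).card

instance (P : I → List (Option S)) (prio : S → List I) (q : S → ℕ) (s : S) :
    Decidable (Competitive P prio q s) :=
  inferInstanceAs (Decidable (_ ≤ _))

/-- `P'` is a Nash equilibrium of the game `(GS^ℓ, P)` with semi-sophisticated students: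
every student guaranteed her first choice reports truthfully; every other student reports
truthfully if she has at most `ℓ` acceptable schools or all her acceptable schools are
competitive, and otherwise lists as acceptable, in the order given by her true preference,
only her acceptable schools that are not competitive. -/
def SemiSophProfile (ℓ : ℕ) (P : I → List (Option S)) (prio : S → List I) (q : S → ℕ)
    (P' : I → List (Option S)) : Prop :=
  ∀ i : I,
    ((∃ s : S, GuaranteedFirstChoice P prio q i s) → P' i = P i) ∧
    (¬ (∃ s : S, GuaranteedFirstChoice P prio q i s) →
      (((acceptables (P i)).length ≤ ℓ ∨ ∀ s ∈ acceptables (P i), Competitive P prio q s) →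
          P' i = P i) ∧
      (¬ ((acceptables (P i)).length ≤ ℓ ∨
            ∀ s ∈ acceptables (P i), Competitive P prio q s) →
          acceptables (P' i) =
            (acceptables (P i)).filter (fun s => decide (¬ Competitive P prio q s))))



set_option linter.unusedSectionVars false
set_option maxHeartbeats 1000000


section ListLemmas
variable {α : Type*} [DecidableEq α]

lemma mem_take_of_indexOf_lt {L : List α} {x : α} {t : ℕ} (hx : x ∈ L)
    (h : L.idxOf x < t) : x ∈ L.take t := by
  have hlt : L.idxOf x < L.length := List.idxOf_lt_length_iff.2 hx
  have : (L.take t)[L.idxOf x]'(by simp [hlt, h]) = x := by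
    rw [List.getElem_take]; exact List.getElem_idxOf hlt
  exact this ▸ List.getElem_mem _

lemma indexOf_lt_of_mem_take {L : List α} (hL : L.Nodup) {x : α} {t : ℕ}
    (hx : x ∈ L.take t) : L.idxOf x < t := by
  obtain ⟨j, hj, hjx⟩ := List.getElem_of_mem hx
  rw [List.getElem_take] at hjx
  have hjL : j < L.length := lt_of_lt_of_le hj (by simp [List.length_take])
  subst hjx
  rw [List.Nodup.idxOf_getElem hL j hjL]
  exact (by simpa [List.length_take] using hj : j < t ∧ j < L.length).1

lemma indexOf_take {L : List α} {x : α} {t : ℕ} (hx : x ∈ L.take t) :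
    (L.take t).idxOf x = L.idxOf x := by
  conv_rhs => rw [← List.take_append_drop t L]
  rw [List.idxOf_append_of_mem hx]

lemma filter_indexOf_lt {p : α → Bool} : ∀ {L : List α}, L.Nodup →
    ∀ {x y : α}, x ∈ L.filter p → y ∈ L.filter p →
    (L.filter p).idxOf x < (L.filter p).idxOf y → L.idxOf x < L.idxOf y := by
  intro L
  induction L with
  | nil => intro _ x y hx; simp at hx
  | cons a L ih =>
    intro hnd x y hx hy hlt
    have hndL : L.Nodup := (List.nodup_cons.1 hnd).2
    have haL : a ∉ L := (List.nodup_cons.1 hnd).1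
    by_cases hpa : p a
    · rw [List.filter_cons_of_pos hpa] at hx hy hlt
      by_cases hya : y = a
      · subst hya; simp at hlt
      · by_cases hxa : x = a
        · subst hxa
          have hyL : y ∈ L := List.mem_of_mem_filter (by
            rcases List.mem_cons.1 hy with h | h
            · exact absurd h hya
            · exact h)
          simp [List.idxOf_cons_self]
          rw [List.idxOf_cons_ne _ (by exact fun h => hya h.symm)]
          omega
        · have hxL : x ∈ L.filter p := by
            rcases List.mem_cons.1 hx with h | h
            · exact absurd h hxa
            · exact h
          have hyL : y ∈ L.filter p := by
            rcases List.mem_cons.1 hy with h | h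
            · exact absurd h hya
            · exact h
          rw [List.idxOf_cons_ne _ (fun h => hxa h.symm),
            List.idxOf_cons_ne _ (fun h => hya h.symm)] at hlt
          rw [List.idxOf_cons_ne _ (fun h => hxa h.symm),
            List.idxOf_cons_ne _ (fun h => hya h.symm)]
          exact Nat.succ_lt_succ (ih hndL hxL hyL (Nat.lt_of_succ_lt_succ hlt))
    · rw [List.filter_cons_of_neg (by simpa using hpa)] at hx hy hlt
      have hxa : x ≠ a := fun h => haL (h ▸ List.mem_of_mem_filter hx)
      have hya : y ≠ a := fun h => haL (h ▸ List.mem_of_mem_filter hy)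
      rw [List.idxOf_cons_ne _ (fun h => hxa h.symm),
        List.idxOf_cons_ne _ (fun h => hya h.symm)]
      exact Nat.succ_lt_succ (ih hndL hx hy hlt)

lemma filter_indexOf_lt_iff {p : α → Bool} {L : List α} (hL : L.Nodup)
    {x y : α} (hx : x ∈ L.filter p) (hy : y ∈ L.filter p) :
    (L.filter p).idxOf x < (L.filter p).idxOf y ↔ L.idxOf x < L.idxOf y := by
  constructor
  · exact filter_indexOf_lt hL hx hy
  · intro h
    rcases lt_trichotomy ((L.filter p).idxOf x) ((L.filter p).idxOf y) with h1 | h1 | h1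
    · exact h1
    · exfalso
      have : x = y := by
        have hx' := List.getElem_idxOf (List.idxOf_lt_length_iff.2 hx)
        have hy' := List.getElem_idxOf (List.idxOf_lt_length_iff.2 hy)
        rw [← hx', ← hy']; congr 1
      subst this; exact lt_irrefl _ h
    · exact absurd (filter_indexOf_lt hL hy hx h1) (by omega)

/-- filter of a prefix is a prefix of the filter. -/
lemma filter_take_eq_take_filter (p : α → Bool) (L : List α) (k : ℕ) :
    (L.take k).filter p = (L.filter p).take ((L.take k).filter p).length := by
  have h : L.filter p = (L.take k).filter p ++ (L.drop k).filter p := by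
    rw [← List.filter_append, List.take_append_drop]
  rw [h, List.take_left]

/-- key filter lemma: filter with an index bound equals filter of a prefix. -/
lemma filter_and_indexOf_lt (p : α → Bool) {L : List α} (hL : L.Nodup) (t : ℕ) :
    L.filter (fun s => p s && decide (L.idxOf s < t)) = (L.take t).filter p := by
  have hsplit : L.filter (fun s => p s && decide (L.idxOf s < t))
      = (L.take t).filter (fun s => p s && decide (L.idxOf s < t))
        ++ (L.drop t).filter (fun s => p s && decide (L.idxOf s < t)) := by
    rw [← List.filter_append, List.take_append_drop]
  rw [hsplit]
  have h1 : (L.take t).filter (fun s => p s && decide (L.idxOf s < t))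
      = (L.take t).filter p := by
    apply List.filter_congr
    intro x hx
    have := indexOf_lt_of_mem_take hL hx
    simp [this]
  have h2 : (L.drop t).filter (fun s => p s && decide (L.idxOf s < t)) = [] := by
    rw [List.filter_eq_nil_iff]
    intro x hx
    have hxL : x ∈ L := by
      conv => rw [← List.take_append_drop t L]
      exact List.mem_append_right _ hx
    have : ¬ (L.idxOf x < t) := by
      intro hlt
      have hmem := mem_take_of_indexOf_lt hxL hlt
      exact List.disjoint_take_drop hL (le_refl t) hmem hx
    simp [this]
  rw [h1, h2, List.append_nil]


/-- **Key truncation lemma**: dropping competitive schools then taking `l` equals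
taking `l + r` then dropping competitive schools. -/
lemma take_filter_truncation (L : List α) (hL : L.Nodup) (C : α → Bool) (l : ℕ) :
    (L.take (l + (L.filter (fun s => C s && decide (∃ s' ∈ ((L.filter (fun s => !C s)).take l),
        L.idxOf s < L.idxOf s'))).length)).filter (fun s => !C s)
      = (L.filter (fun s => !C s)).take l := by
  set N := L.filter (fun s => !C s) with hN
  have hNnd : N.Nodup := hL.filter _
  rcases Nat.eq_zero_or_pos (min l N.length) with hm0 | hmpos
  · -- degenerate case
    have hNl : N.take l = [] := by
      rcases Nat.min_eq_zero_iff.1 hm0 with h | h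
      · simp [h]
      · simp [List.length_eq_zero_iff.1 h]
    have hr : (L.filter (fun s => C s && decide (∃ s' ∈ (N.take l),
        L.idxOf s < L.idxOf s'))).length = 0 := by
      simp [hNl]
    rw [hr, hNl, Nat.add_zero]
    have hsub : ((L.take l).filter (fun s => !C s)).Sublist N :=
      (List.take_sublist l L).filter _
    rcases Nat.min_eq_zero_iff.1 hm0 with h | h
    · simp [h]
    · have := hsub.length_le
      rw [h] at this
      exact List.length_eq_zero_iff.1 (Nat.le_zero.1 this)
  · set m := min l N.length with hm
    have hm1 : 1 ≤ m := hmpos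
    have hmN : m ≤ N.length := min_le_right _ _
    have hml : m ≤ l := min_le_left _ _
    have hm1N : m - 1 < N.length := by omega
    set x := N[m-1] with hx
    have hxN : x ∈ N := List.getElem_mem _
    have hxC : (!C x) = true := List.of_mem_filter (p := fun s => !C s) (by rw [hN] at hxN; exact hxN)
    have hxL : x ∈ L := List.mem_of_mem_filter (by rw [hN] at hxN; exact hxN)
    set t := L.idxOf x with htdef
    have ht : t < L.length := List.idxOf_lt_length_iff.2 hxL
    have hLt : L[t]'ht = x := List.getElem_idxOf ht
    have hidxN : N.idxOf x = m - 1 := List.Nodup.idxOf_getElem hNnd _ _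
    have hNtake : N.take l = N.take m := by
      rw [List.take_eq_take_iff]
      omega
    have mono : ∀ s' ∈ N.take m, L.idxOf s' ≤ t := by
      intro s' hs'
      have hs'N : s' ∈ N := List.take_subset _ _ hs'
      have hidx : N.idxOf s' < m := indexOf_lt_of_mem_take hNnd hs'
      by_cases hsx : s' = x
      · rw [hsx]
      · have hne : N.idxOf s' ≠ m - 1 := by
          intro h
          exact hsx ((List.idxOf_inj hs'N).1 (by rw [h, hidxN]))
        have : N.idxOf s' < N.idxOf x := by omega
        exact le_of_lt (filter_indexOf_lt hL hs'N hxN this)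
    have hxmem : x ∈ N.take l := by
      rw [hNtake]
      exact mem_take_of_indexOf_lt hxN (by omega)
    have stepA : ∀ s ∈ L, ((∃ s' ∈ N.take l, L.idxOf s < L.idxOf s') ↔ L.idxOf s < t) := by
      intro s _
      constructor
      · rintro ⟨s', hs', hlt⟩
        rw [hNtake] at hs'
        exact lt_of_lt_of_le hlt (mono s' hs')
      · intro h
        exact ⟨x, hxmem, h⟩
    have hrfilter : L.filter (fun s => C s && decide (∃ s' ∈ (N.take l),
        L.idxOf s < L.idxOf s')) = (L.take t).filter C := by
      rw [← filter_and_indexOf_lt C hL t]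
      apply List.filter_congr
      intro s hs
      have := stepA s hs
      by_cases hCs : C s
      · simp [hCs, this]
      · simp [hCs]
    set r := (L.filter (fun s => C s && decide (∃ s' ∈ (N.take l),
        L.idxOf s < L.idxOf s'))).length with hrdef
    have hr : r = ((L.take t).filter C).length := by rw [hrdef, hrfilter]
    set F := (L.take t).filter (fun s => !C s) with hF
    have hFpre : F = N.take F.length := filter_take_eq_take_filter _ L t
    have hxnotin : x ∉ L.take t := by
      intro hmem
      exact absurd (indexOf_lt_of_mem_take hL hmem) (by omega)
    have hFlen : F.length = m - 1 := by
      apply le_antisymm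
      · by_contra hlt
        push_neg at hlt
        have : x ∈ N.take F.length := mem_take_of_indexOf_lt hxN (by omega)
        rw [← hFpre] at this
        exact hxnotin (List.mem_of_mem_filter this)
      · by_contra hlt
        push_neg at hlt
        set y := N[F.length]'(by omega) with hy
        have hyN : y ∈ N := List.getElem_mem _
        have hyidx : N.idxOf y = F.length := List.Nodup.idxOf_getElem hNnd _ _
        have hymem : y ∈ F := by
          rw [hF, List.mem_filter]
          constructor
          · apply mem_take_of_indexOf_lt (List.mem_of_mem_filter hyN)
            have : N.idxOf y < N.idxOf x := by omega
            exact filter_indexOf_lt hL hyN hxN this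
          · exact List.of_mem_filter (p := fun s => !C s) (by rw [hN] at hyN; exact hyN)
        rw [hFpre] at hymem
        have := indexOf_lt_of_mem_take hNnd hymem
        omega
    have harith : t = r + (m - 1) := by
      have h1 : (L.take t).length = t := by
        rw [List.length_take]
        omega
      have h2 := List.length_eq_countP_add_countP (p := C) (l := L.take t)
      rw [List.countP_eq_length_filter, List.countP_eq_length_filter] at h2
      have h3 : (List.filter (fun a => decide ¬C a = true) (L.take t)).length = F.length := by
        congr 1
        apply List.filter_congr
        intro s _
        by_cases hCs : C s <;> simp [hCs]
      rw [h1, h3, hFlen] at h2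
      omega
    have hE : (L.take (t+1)).filter (fun s => !C s) = N.take m := by
      have h1 : L.take (t+1) = L.take t ++ [x] := by
        rw [List.take_succ]
        congr 1
        rw [List.getElem?_eq_getElem ht, hLt]
        rfl
      have h2 : N.take m = N.take (m-1) ++ [x] := by
        conv_lhs => rw [show m = (m-1) + 1 by omega]
        rw [List.take_succ]
        congr 1
        rw [List.getElem?_eq_getElem hm1N]
        rfl
      rw [h1, List.filter_append, h2, ← hF, hFpre, hFlen]
      congr 1
      simp [hxC]
    rcases le_or_gt l N.length with hcase | hcase
    · -- m = l
      have hmeq : m = l := by omega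
      have : l + r = t + 1 := by omega
      rw [this, hE, hNtake]
    · -- m = N.length
      have hmeq : m = N.length := by omega
      have hNfull : N.take l = N := List.take_of_length_le (by omega)
      have hNfull' : N.take m = N := List.take_of_length_le (by omega)
      have htle : t + 1 ≤ l + r := by omega
      set G := (L.take (l + r)).filter (fun s => !C s) with hG
      have hGpre : G = N.take G.length := filter_take_eq_take_filter _ L (l+r)
      have hGle : G.length ≤ N.length := ((List.take_sublist _ L).filter _).length_le
      have hsplit : L.take (l + r) = L.take (t+1) ++ (L.take (l+r)).drop (t+1) := by
        conv_lhs => rw [← List.take_append_drop (t+1) (L.take (l+r))]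
        rw [List.take_take, min_eq_left htle]
      have hGge : N.length ≤ G.length := by
        have : G = N ++ ((L.take (l+r)).drop (t+1)).filter (fun s => !C s) := by
          rw [hG]
          conv_lhs => rw [hsplit]
          rw [List.filter_append, hE, hNfull']
        rw [this, List.length_append]
        omega
      have : G.length = N.length := le_antisymm hGle hGge
      rw [hNfull, hGpre, this, List.take_length]


end ListLemmas

section DATheory

variable (P : I → List (Option S)) (prio : S → List I) (q : S → ℕ)

/-- The state of the deferred-acceptance algorithm after `n` rounds. -/
def daRun (n : ℕ) : I → ℕ := (daStep P prio q)^[n] (fun _ => 0)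

lemma daRun_zero : daRun P prio q 0 = fun _ => 0 := rfl

lemma daRun_succ (n : ℕ) :
    daRun P prio q (n + 1) = daStep P prio q (daRun P prio q n) := by
  unfold daRun
  rw [Function.iterate_succ_apply']

lemma le_daStep (σ : I → ℕ) (i : I) : σ i ≤ daStep P prio q σ i := by
  unfold daStep
  split
  · exact le_refl _
  · split
    · exact le_refl _
    · exact Nat.le_succ _

lemma daStep_le (σ : I → ℕ) (i : I) : daStep P prio q σ i ≤ σ i + 1 := by
  unfold daStep
  split
  · exact Nat.le_succ _
  · split
    · exact Nat.le_succ _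
    · exact le_refl _

lemma daTarget_none_iff (σ : I → ℕ) (i : I) :
    daTarget P σ i = none ↔ (acceptables (P i)).length ≤ σ i := by
  unfold daTarget
  exact List.getElem?_eq_none_iff

lemma daTarget_of_lt (σ : I → ℕ) (i : I) (h : σ i < (acceptables (P i)).length) :
    daTarget P σ i = some ((acceptables (P i))[σ i]) := by
  unfold daTarget
  exact List.getElem?_eq_getElem h

lemma daStep_of_none (σ : I → ℕ) (i : I) (h : daTarget P σ i = none) :
    daStep P prio q σ i = σ i := by
  unfold daStep
  rw [h]

lemma daStep_of_held (σ : I → ℕ) (i : I) (s : S) (h : daTarget P σ i = some s)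
    (hh : i ∈ daHeld P prio q σ s) : daStep P prio q σ i = σ i := by
  unfold daStep
  rw [h]
  simp [hh]

lemma daStep_of_rej (σ : I → ℕ) (i : I) (s : S) (h : daTarget P σ i = some s)
    (hh : i ∉ daHeld P prio q σ s) : daStep P prio q σ i = σ i + 1 := by
  unfold daStep
  rw [h]
  simp [hh]

lemma mem_daHeld_target (σ : I → ℕ) (i : I) (s : S) (h : i ∈ daHeld P prio q σ s) :
    daTarget P σ i = some s := by
  unfold daHeld at h
  have := List.mem_filter.1 (List.take_subset _ _ h)
  exact of_decide_eq_true this.2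

lemma daHeld_sublist (σ : I → ℕ) (s : S) : (daHeld P prio q σ s).Sublist (prio s) :=
  ((List.take_sublist _ _).trans List.filter_sublist)

lemma daRun_le_len (n : ℕ) (i : I) :
    daRun P prio q n i ≤ (acceptables (P i)).length := by
  induction n with
  | zero => exact Nat.zero_le _
  | succ n ih =>
    rw [daRun_succ]
    rcases lt_or_eq_of_le ih with h | h
    · exact le_trans (daStep_le P prio q _ i) h
    · rw [daStep_of_none P prio q _ i ((daTarget_none_iff P _ i).2 (le_of_eq h.symm))]
      exact le_of_eq h

lemma daRun_mono {m n : ℕ} (h : m ≤ n) (i : I) :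
    daRun P prio q m i ≤ daRun P prio q n i := by
  induction n with
  | zero => simp_all
  | succ n ih =>
    rcases Nat.lt_or_ge m (n+1) with h' | h'
    · exact le_trans (ih (by omega)) (by rw [daRun_succ]; exact le_daStep P prio q _ i)
    · have : m = n + 1 := by omega
      subst this
      exact le_refl _

/-- Within `|I| * |S| + 1` rounds the algorithm reaches a fixed point. -/
lemma daRun_fix (hlen : ∀ i, (acceptables (P i)).length ≤ Fintype.card S) :
    daStep P prio q (daRun P prio q (Fintype.card I * Fintype.card S + 1)) =
      daRun P prio q (Fintype.card I * Fintype.card S + 1) := by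
  set NN := Fintype.card I * Fintype.card S + 1 with hNN
  have key : ∃ n < NN, daRun P prio q (n+1) = daRun P prio q n := by
    by_contra hcon
    push_neg at hcon
    have grow : ∀ n ≤ NN, n ≤ ∑ i : I, daRun P prio q n i := by
      intro n hn
      induction n with
      | zero => exact Nat.zero_le _
      | succ n ih =>
        have h1 : ∑ i : I, daRun P prio q n i < ∑ i : I, daRun P prio q (n+1) i := by
          apply Finset.sum_lt_sum
          · intro i _
            rw [daRun_succ]
            exact le_daStep P prio q _ i
          · have hne := hcon n (by omega)
            rcases Function.ne_iff.1 hne with ⟨i, hi⟩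
            refine ⟨i, Finset.mem_univ i, ?_⟩
            have : daRun P prio q n i ≤ daRun P prio q (n+1) i := daRun_mono P prio q (by omega) i
            omega
        have := ih (by omega)
        omega
    have h1 := grow NN (le_refl _)
    have h2 : ∑ i : I, daRun P prio q NN i ≤ Fintype.card I * Fintype.card S := by
      calc ∑ i : I, daRun P prio q NN i ≤ ∑ _i : I, Fintype.card S :=
            Finset.sum_le_sum (fun i _ => le_trans (daRun_le_len P prio q NN i) (hlen i))
        _ = Fintype.card I * Fintype.card S := by
            rw [Finset.sum_const, Finset.card_univ, smul_eq_mul]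
    omega
  obtain ⟨n, hn, heq⟩ := key
  have hfix : daStep P prio q (daRun P prio q n) = daRun P prio q n := by
    rw [← daRun_succ]; exact heq
  have hall : ∀ k, daRun P prio q (n + k) = daRun P prio q n := by
    intro k
    unfold daRun
    rw [Nat.add_comm, Function.iterate_add_apply]
    exact Function.iterate_fixed hfix k
  have h1 : daRun P prio q NN = daRun P prio q n := by
    have := hall (NN - n)
    rwa [Nat.add_sub_cancel' (le_of_lt hn)] at this
  rw [h1, hfix]

lemma gs_eq_some_iff (i : I) (s : S) :
    GS P prio q i = some s ↔
      daTarget P (daRun P prio q (Fintype.card I * Fintype.card S + 1)) i = some s ∧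
      i ∈ daHeld P prio q (daRun P prio q (Fintype.card I * Fintype.card S + 1)) s := by
  show (match daTarget P (daRun P prio q _) i with
    | none => none
    | some s => if i ∈ daHeld P prio q (daRun P prio q _) s then some s else none) = some s ↔ _
  rcases htar : daTarget P (daRun P prio q (Fintype.card I * Fintype.card S + 1)) i with _ | s'
  · simp
  · by_cases hh : i ∈ daHeld P prio q (daRun P prio q (Fintype.card I * Fintype.card S + 1)) s'
    · simp only [hh, if_true]
      constructor
      · rintro ⟨rfl⟩; exact ⟨rfl, hh⟩
      · rintro ⟨⟨rfl⟩, _⟩; rfl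
    · simp only [hh, if_false]
      constructor
      · rintro ⟨⟩
      · rintro ⟨⟨rfl⟩, h⟩; exact absurd h hh
end DATheory

section DATheory2

variable (P : I → List (Option S)) (prio : S → List I) (q : S → ℕ)

lemma gs_matched_of_lt (hlen : ∀ i, (acceptables (P i)).length ≤ Fintype.card S) (i : I)
    (h : daRun P prio q (Fintype.card I * Fintype.card S + 1) i < (acceptables (P i)).length) :
    GS P prio q i =
      some ((acceptables (P i))[daRun P prio q (Fintype.card I * Fintype.card S + 1) i]) := by
  have htar := daTarget_of_lt P (daRun P prio q (Fintype.card I * Fintype.card S + 1)) i h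
  rw [gs_eq_some_iff]
  refine ⟨htar, ?_⟩
  by_contra hh
  have h2 := daStep_of_rej P prio q (daRun P prio q (Fintype.card I * Fintype.card S + 1)) i _ htar hh
  rw [daRun_fix P prio q hlen] at h2
  omega

lemma gs_none_of_ge (i : I)
    (h : (acceptables (P i)).length ≤ daRun P prio q (Fintype.card I * Fintype.card S + 1) i) :
    GS P prio q i = none := by
  have htar := (daTarget_none_iff P (daRun P prio q (Fintype.card I * Fintype.card S + 1)) i).2 h
  show (match daTarget P (daRun P prio q _) i with
    | none => none
    | some s => if i ∈ daHeld P prio q (daRun P prio q _) s then some s else none) = none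
  rw [htar]

lemma gs_mem (i : I) (s : S) (h : GS P prio q i = some s) : s ∈ acceptables (P i) := by
  obtain ⟨htar, _⟩ := (gs_eq_some_iff P prio q i s).1 h
  unfold daTarget at htar
  exact List.mem_of_getElem? htar

lemma gs_card_le (hprio : ∀ s, ValidPrio (prio s)) (s : S) :
    (Finset.univ.filter (fun j => GS P prio q j = some s)).card ≤ q s := by
  set NN := Fintype.card I * Fintype.card S + 1 with hNN
  have hsub : Finset.univ.filter (fun j => GS P prio q j = some s) ⊆
      (daHeld P prio q (daRun P prio q NN) s).toFinset := by
    intro j hj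
    rw [Finset.mem_filter] at hj
    rw [List.mem_toFinset]
    exact ((gs_eq_some_iff P prio q j s).1 hj.2).2
  calc (Finset.univ.filter (fun j => GS P prio q j = some s)).card
      ≤ (daHeld P prio q (daRun P prio q NN) s).toFinset.card := Finset.card_le_card hsub
    _ ≤ (daHeld P prio q (daRun P prio q NN) s).length := List.toFinset_card_le _
    _ ≤ q s := by unfold daHeld; exact (List.length_take_le _ _).trans (le_refl _)

/-- The high-priority applicants to `s` ahead of `i`. -/
def fPre (s : S) (i : I) (σ : I → ℕ) : List I :=
  ((prio s).take ((prio s).idxOf i)).filter (fun j => decide (daTarget P σ j = some s))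

lemma fPre_decomp (s : S) (i : I) (σ : I → ℕ) (hv : ValidPrio (prio s)) (hi : daTarget P σ i = some s) :
    (prio s).filter (fun j => decide (daTarget P σ j = some s)) =
      fPre P prio s i σ ++ i ::
        ((prio s).drop ((prio s).idxOf i + 1)).filter (fun j => decide (daTarget P σ j = some s)) := by
  have hmem : i ∈ prio s := hv.2 i
  have hidx : (prio s).idxOf i < (prio s).length := List.idxOf_lt_length_iff.2 hmem
  have hdrop : (prio s).drop ((prio s).idxOf i) =
      i :: (prio s).drop ((prio s).idxOf i + 1) := by
    rw [List.drop_eq_getElem_cons hidx, List.getElem_idxOf hidx]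
  conv_lhs => rw [← List.take_append_drop ((prio s).idxOf i) (prio s)]
  rw [List.filter_append, hdrop, List.filter_cons_of_pos (by simpa using hi)]
  rfl

lemma daHeld_of_fPre (s : S) (i : I) (σ : I → ℕ) (h : q s ≤ (fPre P prio s i σ).length) :
    daHeld P prio q σ s = (fPre P prio s i σ).take (q s) := by
  unfold daHeld
  have : (prio s).filter (fun j => decide (daTarget P σ j = some s)) =
      fPre P prio s i σ ++
        ((prio s).drop ((prio s).idxOf i)).filter (fun j => decide (daTarget P σ j = some s)) := by
    unfold fPre
    rw [← List.filter_append, List.take_append_drop]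
  rw [this, List.take_append_of_le_length h]

lemma fPre_base (s : S) (i : I) (σ : I → ℕ) (hv : ValidPrio (prio s))
    (htar : daTarget P σ i = some s) (hrej : i ∉ daHeld P prio q σ s) :
    q s ≤ (fPre P prio s i σ).length := by
  by_contra hlt
  push_neg at hlt
  apply hrej
  unfold daHeld
  rw [fPre_decomp P prio s i σ hv htar]
  set u := fPre P prio s i σ with hu
  set v := ((prio s).drop ((prio s).idxOf i + 1)).filter
      (fun j => decide (daTarget P σ j = some s)) with hv'
  have hlen2 : u.length < (u ++ i :: v).length := by
    rw [List.length_append]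
    simp
  have hlen3 : u.length < (List.take (q s) (u ++ i :: v)).length := by
    rw [List.length_take]
    omega
  have : (List.take (q s) (u ++ i :: v))[u.length]'hlen3 = i := by
    rw [List.getElem_take, List.getElem_append_right (le_refl _)]
    simp
  exact List.mem_iff_getElem.2 ⟨u.length, hlen3, this⟩

lemma fPre_mem (s : S) (i : I) (σ : I → ℕ) (hv : ValidPrio (prio s)) (j : I)
    (hj : j ∈ fPre P prio s i σ) :
    (prio s).idxOf j < (prio s).idxOf i ∧ daTarget P σ j = some s := by
  unfold fPre at hj
  rw [List.mem_filter] at hj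
  exact ⟨indexOf_lt_of_mem_take hv.1 hj.1, of_decide_eq_true hj.2⟩

lemma fPre_nodup (s : S) (i : I) (σ : I → ℕ) (hv : ValidPrio (prio s)) :
    (fPre P prio s i σ).Nodup :=
  ((List.filter_sublist.trans (List.take_sublist _ _))).nodup hv.1

lemma fPre_step (s : S) (i : I) (σ : I → ℕ) (hv : ValidPrio (prio s))
    (h : q s ≤ (fPre P prio s i σ).length) :
    q s ≤ (fPre P prio s i (daStep P prio q σ)).length := by
  set H := (fPre P prio s i σ).take (q s) with hH
  have hHlen : H.length = q s := by
    rw [hH, List.length_take]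
    omega
  have hHnd : H.Nodup := (List.take_sublist _ _).nodup (fPre_nodup P prio s i σ hv)
  have hHsub : ∀ j ∈ H, j ∈ fPre P prio s i (daStep P prio q σ) := by
    intro j hj
    have hjf : j ∈ fPre P prio s i σ := List.take_subset _ _ hj
    have hmemtake : j ∈ (prio s).take ((prio s).idxOf i) := by
      unfold fPre at hjf
      exact List.mem_of_mem_filter hjf
    have htar : daTarget P σ j = some s := (fPre_mem P prio s i σ hv j hjf).2
    have hheld : j ∈ daHeld P prio q σ s := by
      rw [daHeld_of_fPre P prio q s i σ h]
      exact hj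
    have hstep : daStep P prio q σ j = σ j := daStep_of_held P prio q σ j s htar hheld
    have htar' : daTarget P (daStep P prio q σ) j = some s := by
      unfold daTarget at htar ⊢
      rw [hstep]
      exact htar
    unfold fPre
    rw [List.mem_filter]
    exact ⟨hmemtake, decide_eq_true htar'⟩
  calc q s = H.toFinset.card := by rw [List.toFinset_card_of_nodup hHnd, hHlen]
    _ ≤ (fPre P prio s i (daStep P prio q σ)).toFinset.card := by
        apply Finset.card_le_card
        intro j hj
        rw [List.mem_toFinset] at hj ⊢
        exact hHsub j hj
    _ ≤ (fPre P prio s i (daStep P prio q σ)).length := List.toFinset_card_le _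

lemma fPre_run (s : S) (i : I) (hv : ValidPrio (prio s)) {n N' : ℕ} (hn : n ≤ N')
    (hbase : q s ≤ (fPre P prio s i (daRun P prio q n)).length) :
    q s ≤ (fPre P prio s i (daRun P prio q N')).length := by
  induction N', hn using Nat.le_induction with
  | base => exact hbase
  | succ N' hN ih =>
    rw [daRun_succ]
    exact fPre_step P prio q s i _ hv ih

lemma crossing {f : ℕ → ℕ} (h0 : f 0 = 0) (hstep : ∀ n, f n ≤ f (n+1) ∧ f (n+1) ≤ f n + 1)
    {p N : ℕ} (hp : p < f N) : ∃ n < N, f n = p ∧ f (n+1) = p + 1 := by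
  induction N with
  | zero => omega
  | succ N ih =>
    rcases Nat.lt_or_ge p (f N) with h | h
    · obtain ⟨n, hn, h1, h2⟩ := ih h
      exact ⟨n, by omega, h1, h2⟩
    · have h1 := (hstep N).1
      have h2 := (hstep N).2
      exact ⟨N, by omega, by omega, by omega⟩

end DATheory2

section DATheory3

variable (P : I → List (Option S)) (prio : S → List I) (q : S → ℕ)

/-- **Optimality half**: no student is ever rejected by a school she gets in some
"stable" matching. -/
lemma gs_opt (hv : ∀ s, ValidPrio (prio s)) (hnd : ∀ i, (acceptables (P i)).Nodup)
    (μ : I → Option S)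
    (hIR : ∀ i s, μ i = some s → s ∈ acceptables (P i))
    (hM : ∀ s, (Finset.univ.filter (fun j => μ j = some s)).card ≤ q s)
    (hNB : ∀ i s, s ∈ acceptables (P i) →
      (∀ s₀, μ i = some s₀ →
        (acceptables (P i)).idxOf s < (acceptables (P i)).idxOf s₀) →
      ∀ k, μ k = some s → (prio s).idxOf k < (prio s).idxOf i) :
    ∀ n i s₀, μ i = some s₀ → daRun P prio q n i ≤ (acceptables (P i)).idxOf s₀ := by
  intro n
  induction n with
  | zero => intro i s₀ _; exact Nat.zero_le _
  | succ n ih =>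
    intro i s₀ hμ
    have hmem := hIR i s₀ hμ
    set p := (acceptables (P i)).idxOf s₀ with hp
    have hplen : p < (acceptables (P i)).length := List.idxOf_lt_length_iff.2 hmem
    have hIH := ih i s₀ hμ
    rw [daRun_succ]
    rcases lt_or_eq_of_le hIH with hlt | heq
    · exact le_trans (daStep_le P prio q _ i) hlt
    · have h3 : (acceptables (P i))[daRun P prio q n i]'(by omega) = s₀ := by
        apply (List.idxOf_inj (List.getElem_mem _)).1
        rw [List.Nodup.idxOf_getElem (hnd i)]
        omega
      have htar : daTarget P (daRun P prio q n) i = some s₀ := by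
        rw [daTarget_of_lt P _ i (by omega), h3]
      by_cases hh : i ∈ daHeld P prio q (daRun P prio q n) s₀
      · rw [daStep_of_held P prio q _ i s₀ htar hh]
        omega
      · exfalso
        have hbase := fPre_base P prio q s₀ i (daRun P prio q n) (hv s₀) htar hh
        set H := (fPre P prio s₀ i (daRun P prio q n)).take (q s₀) with hH
        have hHlen : H.length = q s₀ := by rw [hH, List.length_take]; omega
        have hHnd : H.Nodup := (List.take_sublist _ _).nodup (fPre_nodup P prio s₀ i _ (hv s₀))
        have hHmem : ∀ j ∈ H, (prio s₀).idxOf j < (prio s₀).idxOf i ∧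
            daTarget P (daRun P prio q n) j = some s₀ := by
          intro j hj
          exact fPre_mem P prio s₀ i _ (hv s₀) j (List.take_subset _ _ hj)
        have hiH : i ∉ H := by
          intro hiH
          exact absurd (hHmem i hiH).1 (lt_irrefl _)
        have hjex : ∃ j ∈ H, μ j ≠ some s₀ := by
          by_contra hcon
          push_neg at hcon
          have hsub : insert i H.toFinset ⊆
              Finset.univ.filter (fun j => μ j = some s₀) := by
            intro k hk
            rw [Finset.mem_insert] at hk
            rw [Finset.mem_filter]
            rcases hk with rfl | hk
            · exact ⟨Finset.mem_univ _, hμ⟩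
            · rw [List.mem_toFinset] at hk
              exact ⟨Finset.mem_univ _, hcon k hk⟩
          have hcard : q s₀ + 1 ≤ (insert i H.toFinset).card := by
            rw [Finset.card_insert_of_notMem (by rwa [List.mem_toFinset])]
            rw [List.toFinset_card_of_nodup hHnd, hHlen]
          have := Finset.card_le_card hsub
          have := hM s₀
          omega
        obtain ⟨j, hjH, hjne⟩ := hjex
        obtain ⟨hjlt, hjtar⟩ := hHmem j hjH
        have hjlen : daRun P prio q n j < (acceptables (P j)).length := by
          by_contra hcon
          push_neg at hcon
          rw [(daTarget_none_iff P _ j).2 hcon] at hjtar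
          exact nomatch hjtar
        have hjget : (acceptables (P j))[daRun P prio q n j] = s₀ := by
          rw [daTarget_of_lt P _ j hjlen] at hjtar
          exact Option.some.inj hjtar
        have hjmem : s₀ ∈ acceptables (P j) := hjget ▸ List.getElem_mem _
        have hjidx : (acceptables (P j)).idxOf s₀ = daRun P prio q n j := by
          rw [← hjget, List.Nodup.idxOf_getElem (hnd j)]
        have hprem : ∀ s₁, μ j = some s₁ →
            (acceptables (P j)).idxOf s₀ < (acceptables (P j)).idxOf s₁ := by
          intro s₁ h₁
          have := ih j s₁ h₁
          have hne : (acceptables (P j)).idxOf s₀ ≠ (acceptables (P j)).idxOf s₁ := by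
            intro heq'
            have := (List.idxOf_inj hjmem).1 heq'
            exact hjne (this ▸ h₁)
          omega
        have := hNB j s₀ hjmem hprem i hμ
        omega

/-- **Stability of the GS outcome** (no blocking, positive form). -/
lemma gs_noblock (hv : ∀ s, ValidPrio (prio s)) (hnd : ∀ i, (acceptables (P i)).Nodup)
    (hlen : ∀ i, (acceptables (P i)).length ≤ Fintype.card S) (i : I) (s : S)
    (hs : s ∈ acceptables (P i))
    (hpref : ∀ s₀, GS P prio q i = some s₀ →
      (acceptables (P i)).idxOf s < (acceptables (P i)).idxOf s₀) :
    q s ≤ (Finset.univ.filter (fun j => GS P prio q j = some s)).card ∧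
      ∀ k, GS P prio q k = some s → (prio s).idxOf k < (prio s).idxOf i := by
  set NN := Fintype.card I * Fintype.card S + 1 with hNN
  set p := (acceptables (P i)).idxOf s with hp
  have hplen : p < (acceptables (P i)).length := List.idxOf_lt_length_iff.2 hs
  have hplt : p < daRun P prio q NN i := by
    rcases Nat.lt_or_ge (daRun P prio q NN i) ((acceptables (P i)).length) with h | h
    · have := hpref _ (gs_matched_of_lt P prio q hlen i h)
      rwa [List.Nodup.idxOf_getElem (hnd i)] at this
    · omega
  obtain ⟨n, hn, h1, h2⟩ := crossing (f := fun n => daRun P prio q n i) rfl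
    (fun n => ⟨by show daRun P prio q n i ≤ daRun P prio q (n+1) i
                  rw [daRun_succ]; exact le_daStep P prio q _ i,
      by show daRun P prio q (n+1) i ≤ daRun P prio q n i + 1
         rw [daRun_succ]; exact daStep_le P prio q _ i⟩) hplt
  have htar : daTarget P (daRun P prio q n) i = some s := by
    have h3 : (acceptables (P i))[daRun P prio q n i]'(by omega) = s := by
      apply (List.idxOf_inj (List.getElem_mem _)).1
      rw [List.Nodup.idxOf_getElem (hnd i)]
      omega
    rw [daTarget_of_lt P _ i (by omega), h3]
  have hrej : i ∉ daHeld P prio q (daRun P prio q n) s := by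
    intro hh
    have h5 := daStep_of_held P prio q _ i s htar hh
    have h4 : daRun P prio q (n+1) i = daRun P prio q n i := by
      rw [daRun_succ]; exact h5
    omega
  have hbase := fPre_base P prio q s i (daRun P prio q n) (hv s) htar hrej
  have hfin := fPre_run P prio q s i (hv s) (le_of_lt hn) hbase
  have hheld := daHeld_of_fPre P prio q s i (daRun P prio q NN) hfin
  set H := (fPre P prio s i (daRun P prio q NN)).take (q s) with hH
  have hHlen : H.length = q s := by rw [hH, List.length_take]; omega
  have hHnd : H.Nodup := (List.take_sublist _ _).nodup (fPre_nodup P prio s i _ (hv s))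
  have hHgs : ∀ j ∈ H, GS P prio q j = some s := by
    intro j hj
    have hjf := List.take_subset _ _ hj
    have := fPre_mem P prio s i _ (hv s) j hjf
    rw [gs_eq_some_iff]
    exact ⟨this.2, by rw [hheld]; exact hj⟩
  constructor
  · have hsub : H.toFinset ⊆ Finset.univ.filter (fun j => GS P prio q j = some s) := by
      intro k hk
      rw [List.mem_toFinset] at hk
      rw [Finset.mem_filter]
      exact ⟨Finset.mem_univ _, hHgs k hk⟩
    calc q s = H.toFinset.card := by rw [List.toFinset_card_of_nodup hHnd, hHlen]
      _ ≤ _ := Finset.card_le_card hsub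
  · intro k hk
    have := ((gs_eq_some_iff P prio q k s).1 hk).2
    rw [hheld] at this
    exact (fPre_mem P prio s i _ (hv s) k (List.take_subset _ _ this)).1

end DATheory3

section DATheory4

variable (P : I → List (Option S)) (prio : S → List I) (q : S → ℕ)

lemma comp_daHeld_aux (s : S) (hq : q s ≤ (prio s).length)
    (htop : ∀ j ∈ (prio s).take (q s), (acceptables (P j)).head? = some s)
    (σ : I → ℕ) (h0 : ∀ j ∈ (prio s).take (q s), σ j = 0) :
    daHeld P prio q σ s = (prio s).take (q s) := by
  have htar : ∀ j ∈ (prio s).take (q s), daTarget P σ j = some s := by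
    intro j hj
    unfold daTarget
    rw [h0 j hj, ← List.head?_eq_getElem?]
    exact htop j hj
  unfold daHeld
  have hsplit : (prio s).filter (fun j => decide (daTarget P σ j = some s)) =
      (prio s).take (q s) ++
        ((prio s).drop (q s)).filter (fun j => decide (daTarget P σ j = some s)) := by
    conv_lhs => rw [← List.take_append_drop (q s) (prio s)]
    rw [List.filter_append]
    congr 1
    apply List.filter_eq_self.2
    intro j hj
    exact decide_eq_true (htar j hj)
  rw [hsplit, List.take_append_of_le_length (by rw [List.length_take]; omega)]
  rw [List.take_take, min_self]

lemma comp_daRun (s : S) (hq : q s ≤ (prio s).length)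
    (htop : ∀ j ∈ (prio s).take (q s), (acceptables (P j)).head? = some s) (n : ℕ) :
    (∀ j ∈ (prio s).take (q s), daRun P prio q n j = 0) ∧
      daHeld P prio q (daRun P prio q n) s = (prio s).take (q s) := by
  induction n with
  | zero =>
    refine ⟨fun j _ => rfl, comp_daHeld_aux P prio q s hq htop _ (fun j _ => rfl)⟩
  | succ n ih =>
    obtain ⟨h0, hheld⟩ := ih
    have h0' : ∀ j ∈ (prio s).take (q s), daRun P prio q (n+1) j = 0 := by
      intro j hj
      rw [daRun_succ]
      have htar : daTarget P (daRun P prio q n) j = some s := by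
        unfold daTarget
        rw [h0 j hj, ← List.head?_eq_getElem?]
        exact htop j hj
      rw [daStep_of_held P prio q _ j s htar (by rw [hheld]; exact hj)]
      exact h0 j hj
    exact ⟨h0', comp_daHeld_aux P prio q s hq htop _ h0'⟩

/-- At a competitive school, GS assigns exactly the top-priority students. -/
lemma comp_gs (s : S) (hq : q s ≤ (prio s).length)
    (htop : ∀ j ∈ (prio s).take (q s), (acceptables (P j)).head? = some s) :
    (∀ j ∈ (prio s).take (q s), GS P prio q j = some s) ∧
      (∀ k, GS P prio q k = some s → k ∈ (prio s).take (q s)) := by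
  obtain ⟨h0, hheld⟩ := comp_daRun P prio q s hq htop (Fintype.card I * Fintype.card S + 1)
  constructor
  · intro j hj
    rw [gs_eq_some_iff]
    refine ⟨?_, by rw [hheld]; exact hj⟩
    unfold daTarget
    rw [h0 j hj, ← List.head?_eq_getElem?]
    exact htop j hj
  · intro k hk
    have := ((gs_eq_some_iff P prio q k s).1 hk).2
    rwa [hheld] at this

end DATheory4

section DATheory5

variable (P : I → List (Option S)) (prio : S → List I) (q : S → ℕ)

lemma gs_run_idx (hnd : ∀ i, (acceptables (P i)).Nodup) (i : I) (s : S)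
    (h : GS P prio q i = some s) :
    (acceptables (P i)).idxOf s = daRun P prio q (Fintype.card I * Fintype.card S + 1) i := by
  have htar := ((gs_eq_some_iff P prio q i s).1 h).1
  unfold daTarget at htar
  obtain ⟨hlt, hget⟩ := List.getElem?_eq_some_iff.1 htar
  rw [← hget, List.Nodup.idxOf_getElem (hnd i)]

/-- **Core transfer theorem**: GS is unchanged when students drop competitive schools. -/
theorem gs_eq_core (P₁ P₂ : I → List (Option S))
    (hv : ∀ s, ValidPrio (prio s))
    (hnd₁ : ∀ i, (acceptables (P₁ i)).Nodup) (hnd₂ : ∀ i, (acceptables (P₂ i)).Nodup)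
    (hlen₁ : ∀ i, (acceptables (P₁ i)).length ≤ Fintype.card S)
    (hlen₂ : ∀ i, (acceptables (P₂ i)).length ≤ Fintype.card S)
    (Cb : S → Bool)
    (hcase : ∀ i, acceptables (P₁ i) = acceptables (P₂ i) ∨
      (acceptables (P₁ i) = (acceptables (P₂ i)).filter (fun s => !Cb s) ∧
        ∀ s, Cb s → q s ≤ (prio s).idxOf i))
    (hcomp : ∀ s, Cb s → q s ≤ (prio s).length ∧
      ∀ j ∈ (prio s).take (q s), acceptables (P₁ j) = acceptables (P₂ j) ∧
        (acceptables (P₁ j)).head? = some s) :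
    GS P₁ prio q = GS P₂ prio q := by
  have hsub : ∀ i, acceptables (P₁ i) ⊆ acceptables (P₂ i) := by
    intro i
    rcases hcase i with h | ⟨h, _⟩
    · rw [h]; exact fun x hx => hx
    · rw [h]; exact fun x hx => List.mem_of_mem_filter hx
  have htop₂ : ∀ s, Cb s → ∀ j ∈ (prio s).take (q s),
      (acceptables (P₂ j)).head? = some s := by
    intro s hC j hj
    obtain ⟨heq, hhead⟩ := (hcomp s hC).2 j hj
    rw [← heq]; exact hhead
  have hCb_of : ∀ i s, s ∈ acceptables (P₂ i) → s ∉ acceptables (P₁ i) →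
      acceptables (P₁ i) = (acceptables (P₂ i)).filter (fun s => !Cb s) → Cb s := by
    intro i s hs2 hs1 hflt
    by_contra hC
    exact hs1 (hflt ▸ List.mem_filter.2 ⟨hs2, by simp [hC]⟩)
  -- μ₂ only assigns schools listed in P₁
  have T1 : ∀ i s, GS P₂ prio q i = some s → s ∈ acceptables (P₁ i) := by
    intro i s h
    have hs2 : s ∈ acceptables (P₂ i) := gs_mem P₂ prio q i s h
    rcases hcase i with hcs | ⟨hflt, hcp⟩
    · rwa [hcs]
    · by_contra hs1
      have hC := hCb_of i s hs2 hs1 hflt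
      have := (comp_gs P₂ prio q s (hcomp s hC).1 (htop₂ s hC)).2 i h
      have := indexOf_lt_of_mem_take (hv s).1 this
      have := hcp s hC
      omega
  -- index comparisons transfer between the two lists
  have hidx12 : ∀ i x y, x ∈ acceptables (P₁ i) → y ∈ acceptables (P₁ i) →
      ((acceptables (P₁ i)).idxOf x < (acceptables (P₁ i)).idxOf y ↔
        (acceptables (P₂ i)).idxOf x < (acceptables (P₂ i)).idxOf y) := by
    intro i x y hx hy
    rcases hcase i with hcs | ⟨hflt, _⟩
    · rw [hcs]
    · rw [hflt] at hx hy ⊢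
      exact filter_indexOf_lt_iff (hnd₂ i) hx hy
  -- μ₂ is not blocked w.r.t. P₁
  have T2 : ∀ i s, s ∈ acceptables (P₁ i) →
      (∀ s₀, GS P₂ prio q i = some s₀ →
        (acceptables (P₁ i)).idxOf s < (acceptables (P₁ i)).idxOf s₀) →
      ∀ k, GS P₂ prio q k = some s → (prio s).idxOf k < (prio s).idxOf i := by
    intro i s hs hpref
    refine (gs_noblock P₂ prio q hv hnd₂ hlen₂ i s (hsub i hs) ?_).2
    intro s₀ h₀
    exact (hidx12 i s s₀ hs (T1 i s₀ h₀)).1 (hpref s₀ h₀)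
  -- μ₁ is not blocked w.r.t. P₂
  have T3 : ∀ i s, s ∈ acceptables (P₂ i) →
      (∀ s₀, GS P₁ prio q i = some s₀ →
        (acceptables (P₂ i)).idxOf s < (acceptables (P₂ i)).idxOf s₀) →
      ∀ k, GS P₁ prio q k = some s → (prio s).idxOf k < (prio s).idxOf i := by
    intro i s hs hpref
    by_cases hs1 : s ∈ acceptables (P₁ i)
    · refine (gs_noblock P₁ prio q hv hnd₁ hlen₁ i s hs1 ?_).2
      intro s₀ h₀
      exact (hidx12 i s s₀ hs1 (gs_mem P₁ prio q i s₀ h₀)).2 (hpref s₀ h₀)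
    · rcases hcase i with hcs | ⟨hflt, hcp⟩
      · exact absurd (hcs ▸ hs) hs1
      · have hC := hCb_of i s hs hs1 hflt
        have htop₁ : ∀ j ∈ (prio s).take (q s), (acceptables (P₁ j)).head? = some s :=
          fun j hj => ((hcomp s hC).2 j hj).2
        intro k hk
        have hmem := (comp_gs P₁ prio q s (hcomp s hC).1 htop₁).2 k hk
        have := indexOf_lt_of_mem_take (hv s).1 hmem
        have := hcp s hC
        omega
  have o21 := gs_opt P₂ prio q hv hnd₂ (GS P₁ prio q)
    (fun i s h => hsub i (gs_mem P₁ prio q i s h))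
    (fun s => gs_card_le P₁ prio q hv s) T3
    (Fintype.card I * Fintype.card S + 1)
  have o12 := gs_opt P₁ prio q hv hnd₁ (GS P₂ prio q) T1
    (fun s => gs_card_le P₂ prio q hv s) T2
    (Fintype.card I * Fintype.card S + 1)
  funext i
  rcases h1 : GS P₁ prio q i with _ | s₁ <;> rcases h2 : GS P₂ prio q i with _ | s₂
  · rfl
  · exfalso
    have hs₂ : s₂ ∈ acceptables (P₁ i) := T1 i s₂ h2
    have hlt : daRun P₁ prio q (Fintype.card I * Fintype.card S + 1) i <
        (acceptables (P₁ i)).length :=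
      lt_of_le_of_lt (o12 i s₂ h2) (List.idxOf_lt_length_iff.2 hs₂)
    rw [gs_matched_of_lt P₁ prio q hlen₁ i hlt] at h1
    exact nomatch h1
  · exfalso
    have hs₁ : s₁ ∈ acceptables (P₂ i) := hsub i (gs_mem P₁ prio q i s₁ h1)
    have hlt : daRun P₂ prio q (Fintype.card I * Fintype.card S + 1) i <
        (acceptables (P₂ i)).length :=
      lt_of_le_of_lt (o21 i s₁ h1) (List.idxOf_lt_length_iff.2 hs₁)
    rw [gs_matched_of_lt P₂ prio q hlen₂ i hlt] at h2
    exact nomatch h2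
  · congr 1
    have hs₁A1 : s₁ ∈ acceptables (P₁ i) := gs_mem P₁ prio q i s₁ h1
    have hs₂A1 : s₂ ∈ acceptables (P₁ i) := T1 i s₂ h2
    have hs₁A2 : s₁ ∈ acceptables (P₂ i) := hsub i hs₁A1
    have hs₂A2 : s₂ ∈ acceptables (P₂ i) := gs_mem P₂ prio q i s₂ h2
    have e1 : (acceptables (P₁ i)).idxOf s₁ ≤ (acceptables (P₁ i)).idxOf s₂ := by
      rw [gs_run_idx P₁ prio q hnd₁ i s₁ h1]
      exact o12 i s₂ h2
    have e2 : (acceptables (P₂ i)).idxOf s₂ ≤ (acceptables (P₂ i)).idxOf s₁ := by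
      rw [gs_run_idx P₂ prio q hnd₂ i s₂ h2]
      exact o21 i s₁ h1
    by_contra hne
    have hlt1 : (acceptables (P₁ i)).idxOf s₁ < (acceptables (P₁ i)).idxOf s₂ := by
      rcases lt_or_eq_of_le e1 with h | h
      · exact h
      · exact absurd ((List.idxOf_inj hs₁A1).1 h) hne
    have := (hidx12 i s₁ s₂ hs₁A1 hs₂A1).1 hlt1
    omega

end DATheory5

section AcceptablesLemmas

lemma acceptables_somes_append (xs : List S) (r : List (Option S)) :
    acceptables ((xs.map some) ++ none :: r) = xs := by
  induction xs with
  | nil => simp [acceptables]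
  | cons a xs ih =>
    unfold acceptables at ih ⊢
    simp only [List.map_cons, List.cons_append, List.takeWhile_cons]
    simp only [Option.isSome_some, if_true]
    rw [List.filterMap_cons]
    simp only [id]
    exact congrArg _ ih

lemma acceptables_truncate (p : List (Option S)) (k : ℕ) :
    acceptables (truncate p k) = (acceptables p).take k := by
  unfold truncate
  exact acceptables_somes_append _ _

lemma acceptables_nodup {p : List (Option S)} (hp : ValidPref p) :
    (acceptables p).Nodup := by
  unfold acceptables
  apply List.Nodup.filterMap
  · intro a a' b hb hb'
    simp only [id, Option.mem_def] at hb hb'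
    rw [hb, hb']
  · exact (List.takeWhile_sublist _).nodup hp.1

lemma acceptables_length_le {p : List (Option S)} (hp : ValidPref p) :
    (acceptables p).length ≤ Fintype.card S :=
  (acceptables_nodup hp).length_le_card

lemma mem_acceptables {p : List (Option S)} {s : S} :
    s ∈ acceptables p ↔ some s ∈ p.takeWhile Option.isSome := by
  unfold acceptables
  rw [List.mem_filterMap]
  constructor
  · rintro ⟨a, ha, hid⟩
    simp only [id, Option.mem_def] at hid
    exact hid ▸ ha
  · intro h
    exact ⟨some s, h, rfl⟩

lemma indexOf_append_some (s : S) (w v : List (Option S)) (hw : some s ∈ w) :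
    List.idxOf (some s) (w ++ v) = List.idxOf (some s) w := by
  induction w with
  | nil => simp at hw
  | cons a w ih =>
    by_cases has : a = some s
    · subst has; simp [List.idxOf_cons]
    · have hb : (a == some s) = false := beq_eq_false_iff_ne.2 has
      rcases List.mem_cons.1 hw with h | h
      · exact absurd h.symm has
      · simp [List.idxOf_cons, hb, ih h]

lemma indexOf_filterMap_somes :
    ∀ (w : List (Option S)), (∀ x ∈ w, x.isSome) → ∀ s : S, some s ∈ w →
      w.idxOf (some s) = (w.filterMap id).idxOf s := by
  intro w
  induction w with
  | nil => intro _ s hs; simp at hs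
  | cons a w ih =>
    intro hall s hs
    obtain ⟨b, rfl⟩ := Option.isSome_iff_exists.1 (hall a List.mem_cons_self)
    rw [List.filterMap_cons]
    simp only [id]
    by_cases hsb : s = b
    · subst hsb
      simp [List.idxOf_cons]
    · have hb1 : (some b == some s) = false :=
        beq_eq_false_iff_ne.2 (fun h => hsb (Option.some.inj h).symm)
      have hb2 : (b == s) = false := beq_eq_false_iff_ne.2 (fun h => hsb h.symm)
      have hsw : some s ∈ w := by
        rcases List.mem_cons.1 hs with h | h
        · exact absurd (Option.some.inj h) hsb
        · exact h
      simp [List.idxOf_cons, hb1, hb2,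
        ih (fun x hx => hall x (List.mem_cons_of_mem _ hx)) s hsw]

lemma indexOf_some_acceptables {p : List (Option S)} {s : S} (hs : s ∈ acceptables p) :
    p.idxOf (some s) = (acceptables p).idxOf s := by
  have hw : some s ∈ p.takeWhile Option.isSome := mem_acceptables.1 hs
  have h1 : p.idxOf (some s) = (p.takeWhile Option.isSome).idxOf (some s) := by
    conv_lhs => rw [← List.takeWhile_append_dropWhile (p := Option.isSome) (l := p)]
    rw [indexOf_append_some s _ _ hw]
  rw [h1]
  exact indexOf_filterMap_somes _ (fun x hx => List.mem_takeWhile_imp hx) s hw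

lemma prefLt_iff_acceptables {p : List (Option S)} {s s' : S}
    (hs : s ∈ acceptables p) (hs' : s' ∈ acceptables p) :
    prefLt p (some s) (some s') ↔
      (acceptables p).idxOf s < (acceptables p).idxOf s' := by
  unfold prefLt
  rw [indexOf_some_acceptables hs, indexOf_some_acceptables hs']

lemma head?_take {α : Type*} {X : List α} {k : ℕ} (hk : 1 ≤ k) :
    (X.take k).head? = X.head? := by
  cases X with
  | nil => simp
  | cons a X =>
    cases k with
    | zero => omega
    | succ k => simp

lemma prio_length (pr : List I) (hv : ValidPrio pr) : pr.length = Fintype.card I := by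
  have h1 : pr.toFinset = Finset.univ := Finset.eq_univ_iff_forall.2 (by
    intro i; rw [List.mem_toFinset]; exact hv.2 i)
  rw [← List.toFinset_card_of_nodup hv.1, h1, Finset.card_univ]

lemma competitive_top (P : I → List (Option S)) (prio : S → List I) (q : S → ℕ) (s : S)
    (hv : ValidPrio (prio s)) (hc : Competitive P prio q s) :
    q s ≤ (prio s).length ∧
      ∀ j : I, ((prio s).idxOf j < q s ↔ GuaranteedFirstChoice P prio q j s) := by
  set G := Finset.univ.filter (fun i => GuaranteedFirstChoice P prio q i s) with hG
  have hqG : q s ≤ G.card := hc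
  have hinj : Set.InjOn (fun j => (prio s).idxOf j) ↑G := by
    intro a _ b _ hab
    exact (List.idxOf_inj (hv.2 a)).1 hab
  have himage : G.image (fun j => (prio s).idxOf j) ⊆ Finset.range (q s) := by
    intro x hx
    rw [Finset.mem_image] at hx
    obtain ⟨j, hj, rfl⟩ := hx
    rw [hG, Finset.mem_filter] at hj
    exact Finset.mem_range.2 hj.2.2
  have hcardim : (G.image (fun j => (prio s).idxOf j)).card = G.card :=
    Finset.card_image_of_injOn hinj
  have himeq : G.image (fun j => (prio s).idxOf j) = Finset.range (q s) := by
    apply Finset.eq_of_subset_of_card_le himage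
    rw [hcardim, Finset.card_range]
    exact hqG
  constructor
  · rcases Nat.eq_zero_or_pos (q s) with h0 | h0
    · omega
    · have : q s - 1 ∈ Finset.range (q s) := Finset.mem_range.2 (by omega)
      rw [← himeq, Finset.mem_image] at this
      obtain ⟨j, _, hj⟩ := this
      have := List.idxOf_lt_length_iff.2 (hv.2 j)
      omega
  · intro j
    constructor
    · intro hj
      have : (prio s).idxOf j ∈ Finset.range (q s) := Finset.mem_range.2 hj
      rw [← himeq, Finset.mem_image] at this
      obtain ⟨g, hg, hgj⟩ := this
      have : g = j := (List.idxOf_inj (hv.2 g)).1 hgj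
      subst this
      rw [hG, Finset.mem_filter] at hg
      exact hg.2
    · intro hj
      exact hj.2

end AcceptablesLemmas

/-- Lemma 5: let `ℓ > 1` and let `P'` be a Nash equilibrium of the
game `(GS^ℓ, P)` with semi-sophisticated students.  For each student `i` let `rᵢ` be the
number of competitive schools that `i` has dropped under `P'ᵢ` but prefers to at least
one of the top `ℓ` acceptable schools she lists under `P'ᵢ`.  Then
`GS^ℓ(P',≻,q) = GS(P^k̄,≻,q)` where `k̄ᵢ = ℓ + rᵢ`. -/
theorem semi_sophisticated_equilibrium_outcome
    {I S : Type*} [Fintype I] [DecidableEq I] [Fintype S] [DecidableEq S]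
    (hIS : Fintype.card S < Fintype.card I)
    (l : ℕ) (hl : 1 < l)
    (P : I → List (Option S)) (prio : S → List I) (q : S → ℕ)
    (hP : ∀ i, ValidPref (P i)) (hprio : ∀ s, ValidPrio (prio s))
    (P' : I → List (Option S)) (hP' : ∀ i, ValidPref (P' i))
    (hNE : SemiSophProfile l P prio q P')
    (r : I → ℕ)
    (hr : ∀ i : I, r i =
      ((acceptables (P i)).filter (fun s => decide (Competitive P prio q s ∧
          s ∉ acceptables (P' i) ∧
          ∃ s' ∈ (acceptables (P' i)).take l,
            prefLt (P i) (some s) (some s')))).length) :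
    GSk l P' prio q = GS (fun i => truncate (P i) (l + r i)) prio q := by
  classical
  have hr0 : ∀ j, P' j = P j → r j = 0 := by
    intro j hj
    have h1 := hr j
    rw [hj] at h1
    rw [h1, List.length_eq_zero_iff, List.filter_eq_nil_iff]
    intro a ha
    simp only [decide_eq_true_eq, not_and]
    intro _ hnot
    exact fun _ => hnot ha
  show GS (fun i => truncate (P' i) l) prio q = GS (fun i => truncate (P i) (l + r i)) prio q
  apply gs_eq_core prio q (fun i => truncate (P' i) l) (fun i => truncate (P i) (l + r i))
    hprio
    (fun i => by
      rw [acceptables_truncate]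
      exact (List.take_sublist _ _).nodup (acceptables_nodup (hP' i)))
    (fun i => by
      rw [acceptables_truncate]
      exact (List.take_sublist _ _).nodup (acceptables_nodup (hP i)))
    (fun i => by
      rw [acceptables_truncate]
      exact le_trans (List.take_sublist _ _).length_le (acceptables_length_le (hP' i)))
    (fun i => by
      rw [acceptables_truncate]
      exact le_trans (List.take_sublist _ _).length_le (acceptables_length_le (hP i)))
    (fun s => decide (Competitive P prio q s))
    ?hcase ?hcomp
  case hcomp =>
    intro s hC
    replace hC : Competitive P prio q s := of_decide_eq_true hC
    have hct := competitive_top P prio q s (hprio s) hC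
    refine ⟨hct.1, ?_⟩
    intro j hj
    have hidxj : (prio s).idxOf j < q s := indexOf_lt_of_mem_take (hprio s).1 hj
    have hgfc := (hct.2 j).1 hidxj
    have hPj : P' j = P j := (hNE j).1 ⟨s, hgfc⟩
    have hrj : r j = 0 := hr0 j hPj
    constructor
    · rw [acceptables_truncate, acceptables_truncate, hPj, hrj, Nat.add_zero]
    · rw [acceptables_truncate, hPj, head?_take (by omega : 1 ≤ l), hgfc.1]
  case hcase =>
    intro i
    by_cases hg : ∃ s, GuaranteedFirstChoice P prio q i s
    · left
      have hPi := (hNE i).1 hg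
      rw [acceptables_truncate, acceptables_truncate, hPi, hr0 i hPi, Nat.add_zero]
    · by_cases hle : (acceptables (P i)).length ≤ l ∨
        ∀ s ∈ acceptables (P i), Competitive P prio q s
      · left
        have hPi := ((hNE i).2 hg).1 hle
        rw [acceptables_truncate, acceptables_truncate, hPi, hr0 i hPi, Nat.add_zero]
      · right
        have hflt := ((hNE i).2 hg).2 hle
        have hfun : (fun s => decide (¬ Competitive P prio q s)) =
            (fun s : S => !(decide (Competitive P prio q s))) := by
          funext s
          exact decide_not
        have hAcc' : acceptables (P' i) =
            (acceptables (P i)).filter (fun s => !(decide (Competitive P prio q s))) := by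
          rw [hflt, hfun]
        constructor
        · rw [acceptables_truncate, acceptables_truncate, hAcc']
          have hrw : r i = ((acceptables (P i)).filter
              (fun s => decide (Competitive P prio q s) && decide
                (∃ s' ∈ (((acceptables (P i)).filter
                    (fun s => !(decide (Competitive P prio q s)))).take l),
                  (acceptables (P i)).idxOf s < (acceptables (P i)).idxOf s'))).length := by
            rw [hr i]
            congr 1
            apply List.filter_congr
            intro a ha
            have hNsub : ∀ x, x ∈ ((acceptables (P i)).filter
                (fun s => !(decide (Competitive P prio q s)))).take l →
                x ∈ acceptables (P i) :=
              fun x hx => List.mem_of_mem_filter (List.take_subset _ _ hx)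
            have hiff : (Competitive P prio q a ∧ a ∉ acceptables (P' i) ∧
                ∃ s' ∈ (acceptables (P' i)).take l, prefLt (P i) (some a) (some s')) ↔
                (Competitive P prio q a ∧
                  ∃ s' ∈ ((acceptables (P i)).filter
                      (fun s => !(decide (Competitive P prio q s)))).take l,
                    (acceptables (P i)).idxOf a < (acceptables (P i)).idxOf s') := by
              rw [hAcc']
              constructor
              · rintro ⟨h1, _, s', hs', h3⟩
                exact ⟨h1, s', hs', (prefLt_iff_acceptables ha (hNsub s' hs')).1 h3⟩
              · rintro ⟨h1, s', hs', h3⟩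
                refine ⟨h1, ?_, s', hs', (prefLt_iff_acceptables ha (hNsub s' hs')).2 h3⟩
                intro hmem
                have h4 := List.of_mem_filter
                  (p := fun s => !(decide (Competitive P prio q s))) hmem
                rw [Bool.not_eq_true', decide_eq_false_iff_not] at h4
                exact h4 h1
            calc (decide (Competitive P prio q a ∧ a ∉ acceptables (P' i) ∧
                  ∃ s' ∈ (acceptables (P' i)).take l, prefLt (P i) (some a) (some s')))
                = decide (Competitive P prio q a ∧
                  ∃ s' ∈ ((acceptables (P i)).filter
                      (fun s => !(decide (Competitive P prio q s)))).take l,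
                    (acceptables (P i)).idxOf a < (acceptables (P i)).idxOf s') :=
                  decide_eq_decide.2 hiff
              _ = _ := Bool.decide_and _ _
          rw [hrw]
          exact (take_filter_truncation (acceptables (P i)) (acceptables_nodup (hP i))
            (fun s => decide (Competitive P prio q s)) l).symm
        · intro s hCs
          have hc : Competitive P prio q s := of_decide_eq_true hCs
          by_contra hqi
          push_neg at hqi
          exact hg ⟨s, ((competitive_top P prio q s (hprio s) hc).2 i).1 hqi⟩

end SchoolChoice
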